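/- arXiv:math/9905093 — 2 statements merged into one kernel-verified Lean document; each statement's English description precedes it below -/
import Mathlib

section
/- Let n ≥ 1 and q ∈ ℂ with 0 < |q| < 1. For the operator 1 − ĥτ̂_n on H_n: (1) its kernel is ℂ·𝟙, the one-dimensional space of constant tuples (c,…,c), c ∈ ℂ; (2) its image is exactly {F ∈ H_n : Σ_{j=0}^{n−1} Res F_j = 0}. (Remark 2.2.) -/
noncomputable section

/-- Dilation operator: `(dil q k a)(z) = a(q^k z)`.
A formal Laurent series `a(z) = ∑_{m ≤ N} a_m z^m ∈ ℂ((z⁻¹))` is encoded as the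
Hahn series `F : LaurentSeries ℂ` with `F.coeff j = a_{-j}` (support bounded below,
i.e. finitely many positive powers of `z`); dilation sends `a_m ↦ q^{k m} a_m`,
i.e. `coeff j ↦ q^{-(k j)} * coeff j`. -/
def dil (q : ℂ) (k : ℤ) (F : LaurentSeries ℂ) : LaurentSeries ℂ where
  coeff := fun j => q ^ (-(k * j)) * F.coeff j
  isPWO_support' := by
    apply F.isPWO_support'.mono
    intro j hj
    simp only [Function.mem_support] at hj ⊢
    intro h
    exact hj (by rw [h, mul_zero])

/-- `Res a = a₀`, the coefficient of `z⁰`. -/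
def Res (F : LaurentSeries ℂ) : ℂ := F.coeff 0

/-- The bilinear pairing `⟨F, G⟩ = ∑_j Res (F_j G_j)` on `H_n = (ℂ((z⁻¹)))^n`. -/
def pair {n : ℕ} (F G : Fin n → LaurentSeries ℂ) : ℂ := ∑ j, Res (F j * G j)

/-- The operator `ĥτ̂_n` on `H_n`: `(ĥτ̂_n F)_j (z) = F_{j+1 mod n} (q z)`. -/
def htau (q : ℂ) {n : ℕ} [NeZero n] (F : Fin n → LaurentSeries ℂ) :
    Fin n → LaurentSeries ℂ := fun j => dil q 1 (F (j + 1))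

/-- `F ∈ U_n`, i.e. `F = (u(z), u(q⁻¹ z), …, u(q^{-(n-1)} z))` for some `u ∈ ℂ((z⁻¹))`. -/
def InU (q : ℂ) {n : ℕ} (F : Fin n → LaurentSeries ℂ) : Prop :=
  ∃ u : LaurentSeries ℂ, ∀ j : Fin n, F j = dil q (-((j : ℕ) : ℤ)) u

end

noncomputable section AuxForKernelImage

/-- Coefficient-wise multiplier operator. -/
def cmul (w : ℤ → ℂ) (F : LaurentSeries ℂ) : LaurentSeries ℂ where
  coeff := fun m => w m * F.coeff m
  isPWO_support' := by
    apply F.isPWO_support'.mono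
    intro m hm
    simp only [Function.mem_support] at hm ⊢
    intro h
    exact hm (by rw [h, mul_zero])

@[simp] lemma cmul_coeff (w : ℤ → ℂ) (F : LaurentSeries ℂ) (m : ℤ) :
    (cmul w F).coeff m = w m * F.coeff m := rfl

@[simp] lemma dil_coeff (q : ℂ) (k : ℤ) (F : LaurentSeries ℂ) (m : ℤ) :
    (dil q k F).coeff m = q ^ (-(k * m)) * F.coeff m := rfl

/-- The weight used to invert `1 - ĥτ̂`. -/
def wcoef (q : ℂ) (n : ℕ) (i : ℕ) (m : ℤ) : ℂ :=
  if m = 0 then -(i : ℂ) / n else (1 - q ^ (-((n : ℤ) * m)))⁻¹ * q ^ (-(m * i))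

lemma coeff_sum {ι : Type*} (s : Finset ι) (f : ι → LaurentSeries ℂ) (m : ℤ) :
    (∑ i ∈ s, f i).coeff m = ∑ i ∈ s, (f i).coeff m := by
  classical
  induction s using Finset.induction with
  | empty => simp
  | @insert a s h ih => rw [Finset.sum_insert h, Finset.sum_insert h, HahnSeries.coeff_add, ih]

lemma zpow_ne_one {q : ℂ} (hq0 : 0 < ‖q‖) (hq1 : ‖q‖ < 1)
    {t : ℤ} (ht : t ≠ 0) : q ^ t ≠ 1 := by
  intro h
  have h2 : ‖q‖ ^ t = 1 := by
    rw [← norm_zpow, h, norm_one]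
  have h3 := congrArg Real.log h2
  rw [Real.log_zpow, Real.log_one] at h3
  rcases mul_eq_zero.mp h3 with h4 | h4
  · exact ht (by exact_mod_cast h4)
  · exact (Real.log_neg hq0 hq1).ne h4

end AuxForKernelImage

open Fin.NatCast Fin.CommRing

/-- Remark 2.2: for the operator `1 − ĥτ̂_n` on `H_n`, the kernel is the
one-dimensional space `ℂ·𝟙` of constant tuples, and the image is exactly
`{F : ∑_j Res F_j = 0}`. -/
theorem kernel_and_image (n : ℕ) [NeZero n] (q : ℂ)
    (hq0 : 0 < ‖q‖) (hq1 : ‖q‖ < 1) :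
    (∀ F : Fin n → LaurentSeries ℂ,
        (∀ j, F j - htau q F j = 0) ↔ ∃ c : ℂ, ∀ j, F j = c • (1 : LaurentSeries ℂ)) ∧
    (∀ F : Fin n → LaurentSeries ℂ,
        (∃ G : Fin n → LaurentSeries ℂ, ∀ j, F j = G j - htau q G j) ↔
          ∑ j, Res (F j) = 0) := by
  obtain ⟨N, rfl⟩ := Nat.exists_eq_succ_of_ne_zero (NeZero.ne n)
  set n := N + 1 with hn
  have hq : q ≠ 0 := fun h => by simp [h] at hq0
  have hnC : (n : ℂ) ≠ 0 := Nat.cast_ne_zero.mpr (NeZero.ne n)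
  constructor
  · -- kernel
    intro F
    constructor
    · intro h
      have hc : ∀ (j : Fin n) (m : ℤ), (F j).coeff m = q ^ (-m) * (F (j + 1)).coeff m := by
        intro j m
        have hj : F j = htau q F j := sub_eq_zero.mp (h j)
        have := congrArg (fun X => HahnSeries.coeff X m) hj
        simpa [htau] using this
      have hiter : ∀ (j : Fin n) (m : ℤ) (k : ℕ),
          (F j).coeff m = q ^ (-m * (k : ℤ)) * (F (j + (k : Fin n))).coeff m := by
        intro j m k
        induction k with
        | zero => simp
        | succ k ih =>
          rw [ih, hc (j + (k : Fin n)) m]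
          have hcast : (((k + 1 : ℕ)) : Fin n) = (k : Fin n) + 1 := Nat.cast_succ k
          rw [hcast, ← add_assoc, ← mul_assoc, ← zpow_add₀ hq]
          congr 1
          push_cast
          ring
      have hzero : ∀ (j : Fin n) (m : ℤ), m ≠ 0 → (F j).coeff m = 0 := by
        intro j m hm
        have hit := hiter j m n
        rw [show ((n : ℕ) : Fin n) = 0 by simp, add_zero] at hit
        by_contra hne
        have h1 : q ^ (-m * (n : ℤ)) = 1 := by
          have h2 : q ^ (-m * (n : ℤ)) * (F j).coeff m = 1 * (F j).coeff m := by
            rw [one_mul]; exact hit.symm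
          exact mul_right_cancel₀ hne h2
        have := zpow_ne_one hq0 hq1 (t := -m * (n : ℤ)) ?_ h1
        · exact this
        · simp only [ne_eq, mul_eq_zero, neg_eq_zero, not_or]
          exact ⟨hm, Nat.cast_ne_zero.mpr (NeZero.ne n)⟩
      refine ⟨(F 0).coeff 0, ?_⟩
      have hcst : ∀ k : ℕ, (F 0).coeff 0 = (F ((k : ℕ) : Fin n)).coeff 0 := by
        intro k
        induction k with
        | zero => simp
        | succ k ih =>
          rw [ih, hc ((k : ℕ) : Fin n) 0]
          have hcast : (((k + 1 : ℕ)) : Fin n) = (k : Fin n) + 1 := Nat.cast_succ (R := Fin n) k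
          rw [hcast]
          simp
      intro j
      apply HahnSeries.ext
      funext m
      rcases eq_or_ne m 0 with rfl | hm
      · have := hcst j.val
        rw [Fin.cast_val_eq_self] at this
        simp [HahnSeries.coeff_smul, HahnSeries.coeff_one, ← this]
      · rw [hzero j m hm]
        simp [HahnSeries.coeff_smul, HahnSeries.coeff_one, hm]
    · rintro ⟨c, hF⟩ j
      apply HahnSeries.ext
      funext m
      rcases eq_or_ne m 0 with rfl | hm
      · simp [hF, htau, HahnSeries.coeff_sub, HahnSeries.coeff_smul, HahnSeries.coeff_one]
      · simp [hF, htau, HahnSeries.coeff_sub, HahnSeries.coeff_smul, HahnSeries.coeff_one, hm]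
  · -- image
    intro F
    constructor
    · rintro ⟨G, hG⟩
      have : ∀ j : Fin n, Res (F j) = (G j).coeff 0 - (G (j + 1)).coeff 0 := by
        intro j
        rw [Res, hG j, HahnSeries.coeff_sub]
        simp [htau]
      rw [Finset.sum_congr rfl fun j _ => this j, Finset.sum_sub_distrib]
      rw [Fintype.sum_equiv (Equiv.addRight (1 : Fin n))
        (fun j => (G (j + 1)).coeff 0) (fun j => (G j).coeff 0) (fun j => rfl)]
      exact sub_self _
    · intro hsum
      have hone : ∀ m : ℤ, m ≠ 0 → 1 - q ^ (-((n : ℤ) * m)) ≠ 0 := by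
        intro m hm h
        have h1 : q ^ (-((n : ℤ) * m)) = 1 := by linear_combination -h
        exact zpow_ne_one hq0 hq1 (by
          simp only [ne_eq, neg_eq_zero, mul_eq_zero, not_or]
          exact ⟨Nat.cast_ne_zero.mpr (NeZero.ne n), hm⟩) h1
      refine ⟨fun j => ∑ i : Fin n, cmul (wcoef q n i.val) (F (j + i)), fun j => ?_⟩
      apply HahnSeries.ext
      funext m
      set f : Fin n → ℂ := fun k => (F k).coeff m with hf
      rw [HahnSeries.coeff_sub]
      simp only [htau, dil_coeff, coeff_sum, cmul_coeff]
      rw [show -(1 * m) = -m by ring]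
      -- reindex the shifted sum
      have hre : ∑ i : Fin n, wcoef q n i.val m * (F (j + 1 + i)).coeff m
          = ∑ k : Fin n, wcoef q n (k - 1).val m * f (j + k) := by
        refine Fintype.sum_equiv (Equiv.addRight (1 : Fin n)) _ _ fun i => ?_
        simp only [Equiv.coe_addRight, add_sub_cancel_right, hf]
        congr 2
        ring
      rw [hre, Finset.mul_sum, ← Finset.sum_sub_distrib]
      have hkey : ∀ k : Fin n,
          wcoef q n k.val m * f (j + k) - q ^ (-m) * (wcoef q n (k - 1).val m * f (j + k))
          = ((if m = 0 then -(1 : ℂ) / n else 0) + if k = 0 then 1 else 0) * f (j + k) := by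
        intro k
        rw [← mul_assoc, ← sub_mul]
        congr 1
        rcases eq_or_ne k 0 with rfl | hk
        · have hsubv : ((0 : Fin n) - 1).val = N := by
            rw [Fin.coe_sub_one, if_pos rfl]
          rw [if_pos rfl, hsubv]
          rcases eq_or_ne m 0 with rfl | hm
          · simp only [wcoef, Fin.val_zero, eq_self_iff_true, if_true, Nat.cast_zero,
              neg_zero, zpow_zero, one_mul]
            have h1 : (1 : ℂ) + (N : ℂ) ≠ 0 := by
              have h2 : ((N + 1 : ℕ) : ℂ) ≠ 0 := Nat.cast_ne_zero.mpr (Nat.succ_ne_zero N)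
              push_cast at h2
              rw [add_comm]
              exact h2
            have h1' : (N : ℂ) + 1 ≠ 0 := by rw [add_comm]; exact h1
            push_cast [hn]
            field_simp [h1']
            try ring
          · simp only [wcoef, Fin.val_zero, if_neg hm, eq_self_iff_true, if_true,
              Nat.cast_zero, mul_zero, neg_zero, zpow_zero, mul_one, zero_add]
            rw [mul_comm (q ^ (-m)), mul_assoc, ← zpow_add₀ hq,
              show -(m * (N : ℤ)) + -m = -((n : ℤ) * m) by push_cast [hn]; ring,
              ← mul_one_sub]
            exact inv_mul_cancel₀ (hone m hm)
        · have hk1 : 1 ≤ k.val := Nat.one_le_iff_ne_zero.mpr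
            (fun h => hk (Fin.ext (by simp [h])))
          have hsubv : (k - 1).val = k.val - 1 := by
            rw [Fin.coe_sub_one, if_neg hk]
          rw [if_neg hk, add_zero, hsubv]
          rcases eq_or_ne m 0 with rfl | hm
          · simp only [wcoef, eq_self_iff_true, if_true, neg_zero, zpow_zero, one_mul]
            rw [Nat.cast_sub hk1]
            push_cast
            field_simp
            ring
          · simp only [wcoef, if_neg hm]
            rw [mul_comm (q ^ (-m)), mul_assoc, ← zpow_add₀ hq,
              show -(m * ((k.val - 1 : ℕ) : ℤ)) + -m = -(m * (k.val : ℤ)) by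
                rw [Nat.cast_sub hk1]; push_cast; ring]
            simp
      rw [Finset.sum_congr rfl fun k _ => hkey k]
      simp only [add_mul, Finset.sum_add_distrib]
      have h2 : ∑ k : Fin n, (if k = 0 then (1 : ℂ) else 0) * f (j + k) = f j := by
        rw [Finset.sum_congr rfl (g := fun k => if k = 0 then f (j + k) else 0)
          (fun k _ => by by_cases hk : k = 0 <;> simp [hk])]
        rw [Finset.sum_ite_eq' Finset.univ (0 : Fin n) (fun k => f (j + k))]
        simp
      have h1 : ∑ k : Fin n, (if m = 0 then -(1 : ℂ) / n else 0) * f (j + k) = 0 := by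
        rw [← Finset.mul_sum]
        rcases eq_or_ne m 0 with rfl | hm
        · have : ∑ k : Fin n, f (j + k) = ∑ k : Fin n, Res (F k) := by
            refine Fintype.sum_equiv (Equiv.addLeft j) _ _ fun k => ?_
            simp [hf, Res, Equiv.coe_addLeft]
          rw [this, hsum, mul_zero]
        · simp [hm]
      rw [h1, h2, zero_add]
end

section
/- Let q ∈ ℂ with 0 < |q| < 1. Let A, B : ℤ → ℂ((z⁻¹)) be families of Laurent series such that A_i = 0 for all i greater than some N_A, and B_i = 0 for all i greater than some N_B. Then Σ_{i ∈ ℤ} Res( A_i(z) · B_{−i}(q^i z) ) = Σ_{i ∈ ℤ} Res( B_i(z) · A_{−i}(q^i z) ), both sums having only finitely many nonzero terms. (Trace property Tr AB = Tr BA for the algebra ΨD_q of q-pseudodifference symbols A = Σ_{i ≤ N} a_i(z)D^i with relation D·a = a(qz)·D and Tr A = Res a₀.) -/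
lemma dil_zero (q : ℂ) (k : ℤ) : dil q k 0 = 0 := by
  ext j
  simp [dil]

lemma dil_support_subset (q : ℂ) (k : ℤ) (F : LaurentSeries ℂ) :
    (dil q k F).support ⊆ F.support := by
  intro j hj
  simp only [HahnSeries.mem_support, dil] at hj ⊢
  intro h
  exact hj (by rw [h, mul_zero])

lemma res_mul_dil (q : ℂ) (i : ℤ) (F G : LaurentSeries ℂ) :
    Res (F * dil q i G) = Res (G * dil q (-i) F) := by
  unfold Res
  rw [HahnSeries.coeff_mul_right' G.isPWO_support' (dil_support_subset q i G),
    HahnSeries.coeff_mul_right' F.isPWO_support' (dil_support_subset q (-i) F)]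
  refine Finset.sum_nbij' Prod.swap Prod.swap ?_ ?_ (fun _ _ => rfl) (fun _ _ => rfl) ?_
  · intro x hx; exact Finset.swap_mem_addAntidiagonal.mpr hx
  · intro x hx; exact Finset.swap_mem_addAntidiagonal.mpr hx
  · rintro ⟨j, k⟩ hx
    simp only [Finset.mem_addAntidiagonal] at hx
    obtain ⟨-, -, hjk⟩ := hx
    have hk : k = -j := by linarith
    subst hk
    simp only [dil, Prod.swap]
    rw [show -(i * -j) = -(-i * j) by ring]
    ring

/-- Trace property `Tr AB = Tr BA` for q-pseudodifference symbols (section 2.2):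
for families `A, B : ℤ → ℂ((z⁻¹))` vanishing above some index,
`∑_i Res (A_i(z) · B_{-i}(q^i z)) = ∑_i Res (B_i(z) · A_{-i}(q^i z))`,
both sums having only finitely many nonzero terms. -/
theorem trace_commutes (q : ℂ) (hq0 : 0 < ‖q‖) (hq1 : ‖q‖ < 1)
    (A B : ℤ → LaurentSeries ℂ) (NA NB : ℤ)
    (hA : ∀ i : ℤ, NA < i → A i = 0) (hB : ∀ i : ℤ, NB < i → B i = 0) :
    {i : ℤ | Res (A i * dil q i (B (-i))) ≠ 0}.Finite ∧
    {i : ℤ | Res (B i * dil q i (A (-i))) ≠ 0}.Finite ∧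
    ∑ᶠ i : ℤ, Res (A i * dil q i (B (-i)))
      = ∑ᶠ i : ℤ, Res (B i * dil q i (A (-i))) := by
  have key : ∀ X Y : ℤ → LaurentSeries ℂ, ∀ NX NY : ℤ,
    (∀ i : ℤ, NX < i → X i = 0) → (∀ i : ℤ, NY < i → Y i = 0) →
    {i : ℤ | Res (X i * dil q i (Y (-i))) ≠ 0}.Finite := by
    intro X Y NX NY hX hY
    apply Set.Finite.subset (Set.finite_Icc (-NY) NX)
    intro i hi
    simp only [Set.mem_setOf_eq] at hi
    constructor
    · by_contra h
      push_neg at h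
      have : Y (-i) = 0 := hY _ (by linarith)
      rw [this, dil_zero, mul_zero] at hi
      exact hi rfl
    · by_contra h
      push_neg at h
      rw [hX i h, zero_mul] at hi
      exact hi rfl
  refine ⟨key A B NA NB hA hB, key B A NB NA hB hA, ?_⟩
  have h1 : ∀ i : ℤ, Res (A i * dil q i (B (-i))) = Res (B (-i) * dil q (-i) (A (- -i))) := by
    intro i
    rw [neg_neg]
    exact res_mul_dil q i (A i) (B (-i))
  calc ∑ᶠ i : ℤ, Res (A i * dil q i (B (-i)))
      = ∑ᶠ i : ℤ, Res (B (-i) * dil q (-i) (A (- -i))) := finsum_congr h1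
    _ = ∑ᶠ i : ℤ, Res (B i * dil q i (A (-i))) :=
        finsum_comp_equiv (Equiv.neg ℤ) (f := fun i => Res (B i * dil q i (A (-i))))
end
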